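/- Let X₁ be a real n×m₁ matrix, X₂ a real n×m₂ matrix, Y₁ a real d×m₁ matrix, Y₂ a real d×m₂ matrix, and β > 0. Then the two-attractor ridge cost J₂(W) = ‖W * X₁ − Y₁‖_F² + ‖W * X₂ − Y₂‖_F² + β ‖W‖_F² has the unique minimizer W = Y_C * X_Cᵀ * (X_C * X_Cᵀ + β • 1)⁻¹, where X_C = [X₁ X₂] and Y_C = [Y₁ Y₂] are the horizontal concatenations. -/

import Mathlib

/-- The squared Frobenius norm of a real matrix. -/
noncomputable def frobSq {n m : Type*} [Fintype n] [Fintype m]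
    (M : Matrix n m ℝ) : ℝ :=
  ∑ i, ∑ j, (M i j) ^ 2

lemma frobSq_nonneg {n m : Type*} [Fintype n] [Fintype m] (M : Matrix n m ℝ) :
    0 ≤ frobSq M :=
  Finset.sum_nonneg fun _ _ => Finset.sum_nonneg fun _ _ => sq_nonneg _

lemma frobSq_eq_zero {n m : Type*} [Fintype n] [Fintype m] {M : Matrix n m ℝ}
    (h : frobSq M = 0) : M = 0 := by
  ext i j
  have h1 : ∀ i ∈ Finset.univ, (0:ℝ) ≤ ∑ j, (M i j)^2 :=
    fun _ _ => Finset.sum_nonneg fun _ _ => sq_nonneg _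
  have h2 := (Finset.sum_eq_zero_iff_of_nonneg h1).mp h i (Finset.mem_univ i)
  have h3 := (Finset.sum_eq_zero_iff_of_nonneg
    (fun k _ => sq_nonneg (M i k))).mp h2 j (Finset.mem_univ j)
  exact pow_eq_zero_iff (n := 2) (by norm_num) |>.mp h3

lemma frobSq_eq_trace {n m : Type*} [Fintype n] [Fintype m] (M : Matrix n m ℝ) :
    frobSq M = (M * M.transpose).trace := by
  simp [frobSq, Matrix.trace, Matrix.mul_apply, Matrix.diag, sq]

lemma frobSq_add {n m : Type*} [Fintype n] [Fintype m] (P Q : Matrix n m ℝ) :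
    frobSq (P + Q) = frobSq P + frobSq Q + 2 * (P * Q.transpose).trace := by
  have h : (Q * P.transpose).trace = (P * Q.transpose).trace := by
    rw [← Matrix.trace_transpose (Q * P.transpose), Matrix.transpose_mul,
      Matrix.transpose_transpose]
  simp only [frobSq_eq_trace, Matrix.transpose_add, Matrix.add_mul, Matrix.mul_add,
    Matrix.trace_add, h]
  ring

/-- The two-attractor ridge cost has the unique minimizer
`W = Y_C X_Cᵀ (X_C X_Cᵀ + β I)⁻¹` built from the horizontally concatenated data. -/
theorem two_attractor_ridge_unique_minimizer {n m₁ m₂ d : ℕ}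
    (X₁ : Matrix (Fin n) (Fin m₁) ℝ) (X₂ : Matrix (Fin n) (Fin m₂) ℝ)
    (Y₁ : Matrix (Fin d) (Fin m₁) ℝ) (Y₂ : Matrix (Fin d) (Fin m₂) ℝ)
    (β : ℝ) (hβ : 0 < β) :
    let J₂ : Matrix (Fin d) (Fin n) ℝ → ℝ := fun W =>
      frobSq (W * X₁ - Y₁) + frobSq (W * X₂ - Y₂) + β * frobSq W
    let XC : Matrix (Fin n) (Fin m₁ ⊕ Fin m₂) ℝ := Matrix.fromCols X₁ X₂
    let YC : Matrix (Fin d) (Fin m₁ ⊕ Fin m₂) ℝ := Matrix.fromCols Y₁ Y₂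
    let Wstar : Matrix (Fin d) (Fin n) ℝ :=
      YC * XC.transpose * (XC * XC.transpose + β • (1 : Matrix (Fin n) (Fin n) ℝ))⁻¹
    (∀ W, J₂ Wstar ≤ J₂ W) ∧ (∀ W, J₂ Wstar = J₂ W → W = Wstar) := by
  intro J₂ XC YC Wstar
  set A : Matrix (Fin n) (Fin n) ℝ :=
    XC * XC.transpose + β • (1 : Matrix (Fin n) (Fin n) ℝ) with hA_def
  -- A is positive definite, hence invertible
  have hPSD : (XC * XC.transpose).PosSemidef := by
    have := Matrix.posSemidef_self_mul_conjTranspose XC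
    rwa [Matrix.conjTranspose_eq_transpose_of_trivial] at this
  have hPD1 : (β • (1 : Matrix (Fin n) (Fin n) ℝ)).PosDef := by
    rw [Matrix.smul_one_eq_diagonal]
    exact Matrix.posDef_diagonal_iff.mpr fun _ => hβ
  have hA : A.PosDef := Matrix.PosDef.posSemidef_add hPSD hPD1
  have hdet : IsUnit A.det := (Matrix.isUnit_iff_isUnit_det A).mp hA.isUnit
  -- the normal equation
  have hWA : Wstar * A = YC * XC.transpose := by
    show YC * XC.transpose * A⁻¹ * A = YC * XC.transpose
    rw [Matrix.mul_assoc, Matrix.nonsing_inv_mul A hdet, Matrix.mul_one]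
  -- rewrite J₂ using the concatenated matrices
  have hsplit : ∀ W : Matrix (Fin d) (Fin n) ℝ,
      W * XC - YC = Matrix.fromCols (W * X₁ - Y₁) (W * X₂ - Y₂) := by
    intro W
    rw [Matrix.mul_fromCols]
    ext i (j | j) <;> simp [Matrix.fromCols, XC, YC]
  have hfrom : ∀ (P : Matrix (Fin d) (Fin m₁) ℝ) (Q : Matrix (Fin d) (Fin m₂) ℝ),
      frobSq (Matrix.fromCols P Q) = frobSq P + frobSq Q := by
    intro P Q
    simp [frobSq, Matrix.fromCols, Fintype.sum_sum_type, Finset.sum_add_distrib]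
  have hJ : ∀ W, J₂ W = frobSq (W * XC - YC) + β * frobSq W := by
    intro W
    rw [hsplit W, hfrom]
  -- cross term vanishes
  have hcross : ∀ M : Matrix (Fin d) (Fin n) ℝ,
      ((Wstar * XC - YC) * (M * XC).transpose).trace + β * (Wstar * M.transpose).trace
        = 0 := by
    intro M
    have h1 : (Wstar * XC - YC) * (M * XC).transpose
        = (Wstar * (XC * XC.transpose) - YC * XC.transpose) * M.transpose := by
      simp only [Matrix.transpose_mul, Matrix.sub_mul, Matrix.mul_assoc]
    have h2 : Wstar * (XC * XC.transpose) - YC * XC.transpose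
        = -(β • Wstar) := by
      have : Wstar * (XC * XC.transpose) + β • Wstar = YC * XC.transpose := by
        calc Wstar * (XC * XC.transpose) + β • Wstar
            = Wstar * A := by
              rw [hA_def, Matrix.mul_add, Matrix.mul_smul, Matrix.mul_one]
          _ = YC * XC.transpose := hWA
      rw [← this]; abel
    rw [h1, h2]
    simp only [Matrix.neg_mul, Matrix.smul_mul, Matrix.trace_neg, Matrix.trace_smul,
      smul_eq_mul]
    ring
  -- completion of squares
  have hkey : ∀ W, J₂ W = J₂ Wstar + (frobSq ((W - Wstar) * XC) + β * frobSq (W - Wstar)) := by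
    intro W
    have hW : W = Wstar + (W - Wstar) := by abel
    have e1 : W * XC - YC = (Wstar * XC - YC) + (W - Wstar) * XC := by
      rw [Matrix.sub_mul]; abel
    have e2 : frobSq W = frobSq Wstar + frobSq (W - Wstar)
        + 2 * (Wstar * (W - Wstar).transpose).trace := by
      nth_rewrite 1 [hW]
      rw [frobSq_add]
    rw [hJ W, hJ Wstar, e1, frobSq_add, e2]
    linear_combination 2 * hcross (W - Wstar)
  constructor
  · intro W
    rw [hkey W]
    have := frobSq_nonneg ((W - Wstar) * XC)
    have := frobSq_nonneg (W - Wstar)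
    nlinarith
  · intro W hEq
    have h := hkey W
    rw [← hEq] at h
    have h0 : frobSq ((W - Wstar) * XC) + β * frobSq (W - Wstar) = 0 := by linarith
    have h1 := frobSq_nonneg ((W - Wstar) * XC)
    have h2 := frobSq_nonneg (W - Wstar)
    have h3 : frobSq (W - Wstar) = 0 := by nlinarith
    have := frobSq_eq_zero h3
    have : W - Wstar = 0 := this
    linear_combination (norm := (ext i j; simp)) this
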